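/- The screening operator applied to the conformal vector satisfies S_λ ω_ξ = λ₋₁|λ⟩ (−1 − (λ, ξ) + (ε/2)(λ, λ)), where ω_ξ = (1/ε)(½ bⁱ₋₁b_{i,−1} + ξ₋₂)|0⟩ is the conformal vector of the Heisenberg vertex algebra π₀^ε associated to ξ ∈ h. In particular, if ξ = −ρ̌ + ερ and λ = αᵢ is a simple root of an affine Kac–Moody algebra (so (αᵢ, ρ̌) = 1 and (αᵢ, ρ) = (αᵢ,αᵢ)/2), then S_{αᵢ} ω_ξ = 0. -/

import Mathlib

/-!
Statement 7: The screening operator applied to the conformal vector satisfies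
`S_λ ω_ξ = λ₋₁|λ⟩ (−1 − (λ,ξ) + (ε/2)(λ,λ))`, where
`ω_ξ = (1/ε)(½ bⁱ₋₁ b_{i,−1} + ξ₋₂)|0⟩` is the conformal vector of the Heisenberg
vertex algebra `π₀^ε` associated to `ξ ∈ 𝔥`.  In particular, if `ξ = −ρ̌ + ε ρ` and
`λ = αᵢ` is a simple root of an affine Kac–Moody algebra (so `(αᵢ, ρ̌) = 1` and
`(αᵢ, ρ) = (αᵢ,αᵢ)/2`), then `S_{αᵢ} ω_ξ = 0`.

Setup: `cr n a` are the Heisenberg modes acting on `P = π₀^ε`, `Tsh : P →ₗ M` is the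
shift operator `𝖳_λ` (`|0⟩ ↦ |λ⟩`, commuting with the modes `aₙ`, `n ≠ 0`), and, per the
mode expansion of the intertwiner `V_λ(x)`, acting on states of degree ≤ 2 one has
`S_λ = 𝖳_λ ∘ (−λ₁ + ½ λ₋₁(−λ₂ + λ₁λ₁) + R)` where the remainder `R` kills `ω_ξ`.
-/

theorem screening_of_conformal_vector
    {P M H ι : Type} [AddCommGroup P] [Module ℂ P] [AddCommGroup M] [Module ℂ M]
    [AddCommGroup H] [Module ℂ H] [Fintype ι]
    (form : H →ₗ[ℂ] H →ₗ[ℂ] ℂ) (hsymm : ∀ a b : H, form a b = form b a)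
    (B Bd : ι → H)
    (hrec1 : ∀ a : H, (∑ i, form a (B i) • Bd i) = a)
    (hrec2 : ∀ a : H, (∑ i, form a (Bd i) • B i) = a)
    (ξ lam : H) (ε : ℂ) (hε : ε ≠ 0)
    (vac : P)
    (cr : ℤ → H →ₗ[ℂ] Module.End ℂ P)
    (hcomm : ∀ (m n : ℤ) (a b : H),
      cr m a * cr n b - cr n b * cr m a
        = (ε * (m : ℂ) * (if m + n = 0 then form a b else 0)) • (1 : Module.End ℂ P))
    (hann : ∀ n : ℤ, 0 ≤ n → ∀ a : H, cr n a vac = 0)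
    (ω : P)
    (hω : ω = ε⁻¹ • ((2 : ℂ)⁻¹ • ∑ i, cr (-1) (Bd i) (cr (-1) (B i) vac) + cr (-2) ξ vac))
    (Tsh : P →ₗ[ℂ] M) (S : P →ₗ[ℂ] M) (R : P →ₗ[ℂ] P)
    (hS : ∀ v : P, S v =
      Tsh (-(cr 1 lam v)
        + (2 : ℂ)⁻¹ • (cr (-1) lam (-(cr 2 lam v) + cr 1 lam (cr 1 lam v)))
        + R v))
    (hR : R ω = 0) :
    (S ω = (-1 - form lam ξ + ε / 2 * form lam lam) • Tsh (cr (-1) lam vac)) ∧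
    (∀ rhoc rho : H, ξ = -rhoc + ε • rho → form lam rhoc = 1 →
      form lam rho = form lam lam / 2 → S ω = 0) := by

  have key : ∀ (m n : ℤ) (a b : H) (v : P),
      cr m a (cr n b v) = cr n b (cr m a v)
        + (ε * (m : ℂ) * (if m + n = 0 then form a b else 0)) • v := by
    intro m n a b v
    have h := LinearMap.ext_iff.mp (hcomm m n a b) v
    simp only [LinearMap.sub_apply, Module.End.mul_apply, LinearMap.smul_apply,
      Module.End.one_apply] at h
    exact sub_eq_iff_eq_add'.mp h
  have hvac1 : cr 1 lam vac = 0 := hann 1 (by norm_num) lam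
  have hvac2 : cr 2 lam vac = 0 := hann 2 (by norm_num) lam
  have hA : ∀ i, cr 1 lam (cr (-1) (B i) vac) = (ε * form lam (B i)) • vac := by
    intro i
    rw [key]
    simp [hvac1]
  have hB : ∀ i, cr 1 lam (cr (-1) (Bd i) (cr (-1) (B i) vac))
      = (ε * form lam (B i)) • (cr (-1) (Bd i) vac)
        + (ε * form lam (Bd i)) • (cr (-1) (B i) vac) := by
    intro i
    rw [key, hA]
    simp [map_smul]
  have hsum1 : (∑ i, (form lam (B i)) • (cr (-1) (Bd i) vac)) = cr (-1) lam vac := by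
    have h := congrArg (fun a => cr (-1) a vac) (hrec1 lam)
    simpa using h
  have hsum2 : (∑ i, (form lam (Bd i)) • (cr (-1) (B i) vac)) = cr (-1) lam vac := by
    have h := congrArg (fun a => cr (-1) a vac) (hrec2 lam)
    simpa using h
  have h1 : cr 1 lam ω = cr (-1) lam vac := by
    rw [hω]
    rw [map_smul, map_add, map_smul, map_sum]
    have hξ2 : cr 1 lam (cr (-2) ξ vac) = 0 := by
      rw [key]
      simp [hvac1]
    rw [hξ2, add_zero]
    simp only [hB]
    rw [Finset.sum_add_distrib]
    simp only [mul_smul]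
    rw [← Finset.smul_sum, ← Finset.smul_sum, hsum1, hsum2]
    match_scalars
    field_simp
    norm_num
  have h11 : cr 1 lam (cr 1 lam ω) = (ε * form lam lam) • vac := by
    rw [h1, key]
    simp [hvac1]
  have h2 : cr 2 lam ω = (2 * form lam ξ) • vac := by
    rw [hω]
    rw [map_smul, map_add, map_smul, map_sum]
    have hq : ∀ i, cr 2 lam (cr (-1) (Bd i) (cr (-1) (B i) vac)) = 0 := by
      intro i
      rw [key]
      have : cr 2 lam (cr (-1) (B i) vac) = 0 := by
        rw [key]
        simp [hvac2]
      simp [this]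
    have hξ2 : cr 2 lam (cr (-2) ξ vac) = (ε * 2 * form lam ξ) • vac := by
      rw [key]
      simp [hvac2]
    simp only [hq, Finset.sum_const_zero, smul_zero, zero_add, hξ2]
    rw [smul_smul]
    congr 1
    field_simp
  have hmain : S ω = (-1 - form lam ξ + ε / 2 * form lam lam) • Tsh (cr (-1) lam vac) := by
    rw [hS, hR, add_zero, h11, h2, h1]
    rw [← map_smul]
    congr 1
    simp only [map_add, map_neg, map_smul]
    module
  refine ⟨hmain, ?_⟩
  intro rhoc rho hxi h1' h2'
  rw [hmain]
  have : form lam ξ = -1 + ε * (form lam lam / 2) := by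
    rw [hxi]
    simp [map_smul, h1', h2', smul_eq_mul]
  rw [this]
  have : (-1 - (-1 + ε * (form lam lam / 2)) + ε / 2 * form lam lam) = 0 := by ring
  rw [this, zero_smul]
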